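/- Let R be a commutative integral domain, t,s units of R, c₀ ∈ R, and define a*b = t·a + s·b + c₀ for a,b ∈ R. Then the identity A15, namely x*(x*(y*z)) = ((x*x)*y)*z for all x,y,z ∈ R, holds if and only if s = 1 and (t = 1 or t = −2) (with no restriction on c₀). -/
import Mathlib


/-- The affine operation `a * b = t·a + s·b + c₀` on a commutative integral domain. -/
def affOp {R : Type*} [CommRing R] (t s c₀ : R) (a b : R) : R := t * a + s * b + c₀

/-- An affine quasigroup over an integral domain satisfies the identity A15,
`x(x(yz)) = ((xx)y)z`, iff `s = 1` and (`t = 1` or `t = −2`). -/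
theorem affine_A15_iff {R : Type*} [CommRing R] [IsDomain R]
    (t s c₀ : R) (ht : IsUnit t) (hs : IsUnit s) :
    (∀ x y z : R,
        affOp t s c₀ x (affOp t s c₀ x (affOp t s c₀ y z)) =
          affOp t s c₀ (affOp t s c₀ (affOp t s c₀ x x) y) z) ↔
      (s = 1 ∧ (t = 1 ∨ t = -2)) := by
  have hs0 : s ≠ 0 := hs.ne_zero
  have ht0 : t ≠ 0 := ht.ne_zero
  constructor
  · intro h
    have hC := h 0 0 0
    have hy := h 0 1 0
    have hx := h 1 0 0
    simp only [affOp] at hC hy hx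
    have hs1 : s = 1 := by
      have h1 : t * (s * (s - 1)) = 0 := by linear_combination hy - hC
      rcases mul_eq_zero.mp h1 with h2 | h2
      · exact absurd h2 ht0
      · rcases mul_eq_zero.mp h2 with h3 | h3
        · exact absurd h3 hs0
        · exact sub_eq_zero.mp h3
    refine ⟨hs1, ?_⟩
    subst hs1
    have h4 : t * ((t - 1) * (t + 2)) = 0 := by linear_combination hC - hx
    rcases mul_eq_zero.mp h4 with h5 | h5
    · exact absurd h5 ht0
    rcases mul_eq_zero.mp h5 with h6 | h6
    · left; exact sub_eq_zero.mp h6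
    · right; exact eq_neg_of_add_eq_zero_left h6
  · rintro ⟨rfl, rfl | rfl⟩ x y z <;> simp only [affOp] <;> ring
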